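/- Let U = {X_0, …, X_{L−1}} be a perfectly balanced (N,M,L)-FHS set over F with N ≥ 2 and L ≥ 2 (so that M divides N and N_{X_i}(a) = N/M for every i and every a ∈ F). Then U has optimal average Hamming correlation, i.e., A_a(U)/(N(L−1)) + A_c(U)/(N−1) = (NL−M)/(M(N−1)(L−1)). -/

import Mathlib

open Finset

/-- Periodic Hamming correlation of two FHSs `X, Y : ZMod N → F` at shift `τ`. -/
def Hcorr {N : ℕ} [NeZero N] {F : Type*} [DecidableEq F]
    (X Y : ZMod N → F) (τ : ZMod N) : ℕ :=
  (Finset.univ.filter (fun t => X t = Y (t + τ))).card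

/-- `N_X(a)`: number of occurrences of frequency `a` in the FHS `X`. -/
def countFreq {N : ℕ} [NeZero N] {F : Type*} [DecidableEq F]
    (X : ZMod N → F) (a : F) : ℕ :=
  (Finset.univ.filter (fun t => X t = a)).card

/-- `N_U(a)`: total number of occurrences of `a` in the FHS set `U`. -/
def countFreqSet {N L : ℕ} [NeZero N] {F : Type*} [DecidableEq F]
    (U : Fin L → ZMod N → F) (a : F) : ℕ :=
  ∑ i : Fin L, countFreq (U i) a

/-- `S_a(U)`: sum of all out-of-phase Hamming autocorrelation values. -/
def Sa {N L : ℕ} [NeZero N] {F : Type*} [DecidableEq F]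
    (U : Fin L → ZMod N → F) : ℕ :=
  ∑ i : Fin L, ∑ τ ∈ Finset.univ \ {(0 : ZMod N)}, Hcorr (U i) (U i) τ

/-- `S_c(U)`: sum of all Hamming crosscorrelation values (ordered pairs `i ≠ j`). -/
def Sc {N L : ℕ} [NeZero N] {F : Type*} [DecidableEq F]
    (U : Fin L → ZMod N → F) : ℕ :=
  ∑ i : Fin L, ∑ j ∈ Finset.univ \ {i}, ∑ τ : ZMod N, Hcorr (U i) (U j) τ

/-- Average Hamming autocorrelation `A_a(U) = S_a(U)/(L(N-1))`. -/
def Aa {N L : ℕ} [NeZero N] {F : Type*} [DecidableEq F]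
    (U : Fin L → ZMod N → F) : ℚ :=
  (Sa U : ℚ) / ((L : ℚ) * ((N : ℚ) - 1))

/-- Average Hamming crosscorrelation `A_c(U) = S_c(U)/(L(L-1)N)`. -/
def Ac {N L : ℕ} [NeZero N] {F : Type*} [DecidableEq F]
    (U : Fin L → ZMod N → F) : ℚ :=
  (Sc U : ℚ) / ((L : ℚ) * ((L : ℚ) - 1) * (N : ℚ))

/-- `H_a(U)`: maximum out-of-phase Hamming autocorrelation of the set `U`. -/
def Ha {N L : ℕ} [NeZero N] {F : Type*} [DecidableEq F]
    (U : Fin L → ZMod N → F) : ℕ :=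
  Finset.univ.sup fun i => (Finset.univ \ {(0 : ZMod N)}).sup fun τ => Hcorr (U i) (U i) τ

/-- `H_c(U)`: maximum Hamming crosscorrelation of the set `U`. -/
def Hc {N L : ℕ} [NeZero N] {F : Type*} [DecidableEq F]
    (U : Fin L → ZMod N → F) : ℕ :=
  Finset.univ.sup fun i => (Finset.univ \ {i}).sup fun j =>
    Finset.univ.sup fun τ => Hcorr (U i) (U j) τ

/-- `U` has optimal average Hamming correlation (meets the Peng et al. AHC bound with equality). -/
def optimalAHC {N L : ℕ} [NeZero N] {F : Type*} [Fintype F] [DecidableEq F]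
    (U : Fin L → ZMod N → F) : Prop :=
  Aa U / ((N : ℚ) * ((L : ℚ) - 1)) + Ac U / ((N : ℚ) - 1)
    = ((N : ℚ) * L - Fintype.card F) /
      ((Fintype.card F : ℚ) * ((N : ℚ) - 1) * ((L : ℚ) - 1))

/-- The cyclotomic class `C_r = {α^(Ml+r) : 0 ≤ l ≤ f-1}`. -/
def cycClass {F : Type*} [Monoid F] [DecidableEq F] (α : F) (M f r : ℕ) : Finset F :=
  (Finset.range f).image fun l => α ^ (M * l + r)

/-- The cyclotomic number `(i,j)_M = |(C_i + 1) ∩ C_j|`. -/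
def cycNum {F : Type*} [Field F] [DecidableEq F] (α : F) (M f i j : ℕ) : ℕ :=
  (((cycClass α M f i).image fun x => x + 1) ∩ cycClass α M f j).card


lemma sum_countFreq' {N : ℕ} [NeZero N] {F : Type*} [Fintype F] [DecidableEq F]
    (X : ZMod N → F) : ∑ a : F, countFreq X a = N := by
  unfold countFreq
  rw [← Finset.card_eq_sum_card_fiberwise (fun t _ => Finset.mem_univ (X t))]
  simp [Finset.card_univ, ZMod.card]

lemma sum_Hcorr' {N : ℕ} [NeZero N] {F : Type*} [Fintype F] [DecidableEq F]
    (X Y : ZMod N → F) :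
    ∑ τ : ZMod N, Hcorr X Y τ = ∑ a : F, countFreq X a * countFreq Y a := by
  unfold Hcorr
  simp_rw [Finset.card_filter]
  rw [Finset.sum_comm]
  have h1 : ∀ t : ZMod N, (∑ τ : ZMod N, if X t = Y (t + τ) then 1 else 0)
      = countFreq Y (X t) := by
    intro t
    have : (countFreq Y (X t)) = ∑ s : ZMod N, if Y s = X t then 1 else 0 := by
      rw [countFreq, Finset.card_filter]
    rw [this]
    exact Fintype.sum_equiv (Equiv.addLeft t) _ _ (fun τ => by simp [eq_comm])
  simp_rw [h1]
  rw [← Finset.sum_fiberwise Finset.univ X (fun t => countFreq Y (X t))]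
  refine Finset.sum_congr rfl fun a _ => ?_
  have : ∑ t ∈ Finset.univ.filter (fun t => X t = a), countFreq Y (X t)
      = ∑ t ∈ Finset.univ.filter (fun t => X t = a), countFreq Y a :=
    Finset.sum_congr rfl fun t ht => by rw [(Finset.mem_filter.mp ht).2]
  rw [this, Finset.sum_const, smul_eq_mul]
  rfl

lemma Hcorr_zero' {N : ℕ} [NeZero N] {F : Type*} [DecidableEq F]
    (X : ZMod N → F) : Hcorr X X 0 = N := by
  simp [Hcorr, ZMod.card]

/-- Corollary 7, a perfectly balanced FHS set has optimal AHC. -/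
theorem perfectly_balanced_optimal_AHC {N M L : ℕ} [NeZero N] (hN : 2 ≤ N) (hL : 2 ≤ L)
    {F : Type*} [Fintype F] [DecidableEq F] (hM : Fintype.card F = M)
    (U : Fin L → ZMod N → F)
    (hpb : ∀ (i : Fin L) (a b : F), countFreq (U i) a = countFreq (U i) b) :
    Aa U / ((N : ℚ) * ((L : ℚ) - 1)) + Ac U / ((N : ℚ) - 1)
      = ((N : ℚ) * (L : ℚ) - (M : ℚ)) / ((M : ℚ) * ((N : ℚ) - 1) * ((L : ℚ) - 1)) := by
  have hNpos : 0 < N := Nat.lt_of_lt_of_le (by norm_num) hN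
  have hF : Nonempty F := ⟨U ⟨0, by omega⟩ 0⟩
  have hMpos : 0 < M := hM ▸ Fintype.card_pos
  -- each frequency appears N/M times
  have hbal : ∀ (i : Fin L) (a : F), M * countFreq (U i) a = N := by
    intro i a
    have h1 : ∑ b : F, countFreq (U i) b = N := sum_countFreq' (U i)
    have h2 : ∑ b : F, countFreq (U i) b = M * countFreq (U i) a := by
      rw [Finset.sum_congr rfl (fun b _ => hpb i b a), Finset.sum_const,
        Finset.card_univ, hM, smul_eq_mul]
    omega
  have hM0 : (M : ℚ) ≠ 0 := by positivity
  have hcQ : ∀ (i : Fin L) (a : F), (countFreq (U i) a : ℚ) = (N : ℚ) / M := by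
    intro i a
    rw [eq_div_iff hM0]
    exact_mod_cast (by rw [mul_comm]; exact hbal i a : countFreq (U i) a * M = N)
  -- full-period correlation sum
  have hsum : ∀ i j : Fin L,
      ((∑ τ : ZMod N, Hcorr (U i) (U j) τ : ℕ) : ℚ) = (N : ℚ) ^ 2 / M := by
    intro i j
    rw [sum_Hcorr']
    push_cast
    rw [Finset.sum_congr rfl (fun a _ => by rw [hcQ i a, hcQ j a]), Finset.sum_const,
      Finset.card_univ, hM, nsmul_eq_mul]
    field_simp
  -- Sa
  have hSa : (Sa U : ℚ) = (L : ℚ) * ((N : ℚ) ^ 2 / M - N) := by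
    have h1 : ∀ i : Fin L,
        ((∑ τ ∈ Finset.univ \ {(0 : ZMod N)}, Hcorr (U i) (U i) τ : ℕ) : ℚ)
          = (N : ℚ) ^ 2 / M - N := by
      intro i
      have key : ∑ τ ∈ Finset.univ \ {(0 : ZMod N)}, Hcorr (U i) (U i) τ + N
          = ∑ τ : ZMod N, Hcorr (U i) (U i) τ := by
        rw [Finset.sdiff_singleton_eq_erase]
        have h := Finset.add_sum_erase Finset.univ (fun τ => Hcorr (U i) (U i) τ)
          (Finset.mem_univ (0 : ZMod N))
        rw [Hcorr_zero' (U i)] at h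
        rw [add_comm]
        exact h
      have := congrArg (fun n : ℕ => (n : ℚ)) key
      simp only [Nat.cast_add] at this
      rw [hsum i i] at this
      linarith
    unfold Sa
    push_cast [h1]
    simp [Finset.sum_const, Finset.card_univ]
    ring
  -- Sc
  have hSc : (Sc U : ℚ) = (L : ℚ) * ((L : ℚ) - 1) * ((N : ℚ) ^ 2 / M) := by
    unfold Sc
    push_cast
    have h1 : ∀ i : Fin L, ∑ j ∈ Finset.univ \ {i},
        ∑ τ : ZMod N, (Hcorr (U i) (U j) τ : ℚ) = ((L : ℚ) - 1) * ((N : ℚ) ^ 2 / M) := by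
      intro i
      have h2 : ∀ j : Fin L, ∑ τ : ZMod N, (Hcorr (U i) (U j) τ : ℚ)
          = (N : ℚ) ^ 2 / M := by
        intro j
        have := hsum i j
        push_cast at this
        exact this
      rw [Finset.sum_congr rfl (fun j _ => h2 j), Finset.sum_const]
      have hcard : (Finset.univ \ {i}).card = L - 1 := by
        rw [Finset.sdiff_singleton_eq_erase, Finset.card_erase_of_mem (Finset.mem_univ _),
          Finset.card_univ, Fintype.card_fin]
      rw [hcard, nsmul_eq_mul]
      congr 1
      have : (1 : ℕ) ≤ L := by omega
      push_cast [Nat.cast_sub this]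
      ring
    rw [Finset.sum_congr rfl (fun i _ => h1 i), Finset.sum_const, Finset.card_univ,
      Fintype.card_fin, nsmul_eq_mul]
    ring
  -- final computation
  unfold Aa Ac
  rw [hSa, hSc]
  have hN0 : (N : ℚ) ≠ 0 := by positivity
  have hL0 : (L : ℚ) ≠ 0 := by positivity
  have hN1 : (N : ℚ) - 1 ≠ 0 := by
    have : (2 : ℚ) ≤ (N : ℚ) := by exact_mod_cast hN
    linarith
  have hL1 : (L : ℚ) - 1 ≠ 0 := by
    have : (2 : ℚ) ≤ (L : ℚ) := by exact_mod_cast hL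
    linarith
  field_simp
  ring
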